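/- Let b ∈ ℝ and let μ be a probability measure on ℝ concentrated on (−∞, b], with Cauchy transform G(z) = ∫ (z−x)⁻¹ dμ(x) for z > b. If (z_n) is a sequence in (b, ∞) such that G(z_n) → +∞ as n → ∞, then z_n → b and (z_n − b)·G(z_n) → μ({b}). -/

import Mathlib

open MeasureTheory Filter Topology

/-- For a probability measure `μ` on `ℝ` concentrated on `(-∞, b]` with
Cauchy transform `G(z) = ∫ (z-x)⁻¹ dμ(x)`, if `z_n ∈ (b, ∞)` is a sequence
with `G(z_n) → +∞`, then `z_n → b` and `(z_n - b)·G(z_n) → μ({b})`. -/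
theorem stmt10 (b : ℝ) (μ : Measure ℝ) [IsProbabilityMeasure μ]
    (hsupp : μ (Set.Ioi b) = 0)
    (z : ℕ → ℝ) (hz : ∀ n, z n ∈ Set.Ioi b)
    (hG : Tendsto (fun n => ∫ x, (z n - x)⁻¹ ∂μ) atTop atTop) :
    Tendsto z atTop (𝓝 b) ∧
    Tendsto (fun n => (z n - b) * ∫ x, (z n - x)⁻¹ ∂μ)
      atTop (𝓝 ((μ {b}).toReal)) := by
  have hae : ∀ᵐ x ∂μ, x ≤ b := by
    rw [ae_iff]
    simpa [Set.Ioi, not_le] using hsupp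
  have hzb : ∀ n, b < z n := hz
  have hbound : ∀ n, (∫ x, (z n - x)⁻¹ ∂μ) ≤ (z n - b)⁻¹ := by
    intro n
    have hpos : 0 < z n - b := sub_pos.mpr (hzb n)
    have hint : Integrable (fun x => (z n - x)⁻¹) μ := by
      refine Integrable.mono' (integrable_const ((z n - b)⁻¹)) ?_ ?_
      · exact (measurable_const.sub measurable_id).inv.aestronglyMeasurable
      · filter_upwards [hae] with x hx
        have h1 : 0 < z n - x := by linarith
        rw [Real.norm_eq_abs, abs_of_pos (inv_pos.mpr h1)]
        exact inv_anti₀ hpos (by linarith)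
    calc ∫ x, (z n - x)⁻¹ ∂μ ≤ ∫ _x, (z n - b)⁻¹ ∂μ := by
          refine integral_mono_ae hint (integrable_const _) ?_
          filter_upwards [hae] with x hx
          exact inv_anti₀ hpos (by linarith)
      _ = (z n - b)⁻¹ := by simp
  have hinv : Tendsto (fun n => (z n - b)⁻¹) atTop atTop :=
    tendsto_atTop_mono hbound hG
  have hz0 : Tendsto (fun n => z n - b) atTop (𝓝 0) := by
    have := tendsto_inv_atTop_zero.comp hinv
    simpa [Function.comp_def, inv_inv] using this
  have hzt : Tendsto z atTop (𝓝 b) := by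
    have := hz0.add_const b
    simpa using this
  refine ⟨hzt, ?_⟩
  have key : Tendsto (fun n => ∫ x, (z n - b) * (z n - x)⁻¹ ∂μ) atTop
      (𝓝 (∫ x, Set.indicator {b} (fun _ => (1:ℝ)) x ∂μ)) := by
    apply tendsto_integral_of_dominated_convergence (fun _ => (1:ℝ))
    · intro n
      exact (measurable_const.mul
        ((measurable_const.sub measurable_id).inv)).aestronglyMeasurable
    · exact integrable_const 1
    · intro n
      filter_upwards [hae] with x hx
      have hpos : 0 < z n - b := sub_pos.mpr (hzb n)
      have h1 : 0 < z n - x := by linarith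
      rw [Real.norm_eq_abs, abs_of_nonneg (by positivity)]
      rw [← div_eq_mul_inv, div_le_one h1]
      linarith
    · filter_upwards [hae] with x hx
      rcases eq_or_lt_of_le hx with rfl | hlt
      · have heq : ∀ n, (z n - x) * (z n - x)⁻¹ = (1:ℝ) := fun n =>
          mul_inv_cancel₀ (ne_of_gt (sub_pos.mpr (hzb n)))
        simp only [heq, Set.indicator_of_mem (Set.mem_singleton x)]
        exact tendsto_const_nhds
      · have h1 : Tendsto (fun n => (z n - x)⁻¹) atTop (𝓝 ((b - x)⁻¹)) :=
          (hzt.sub_const x).inv₀ (ne_of_gt (sub_pos.mpr hlt))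
        have := hz0.mul h1
        rw [zero_mul] at this
        simpa [Set.indicator_of_notMem, (ne_of_lt hlt)] using this
  have hrw : (fun n => (z n - b) * ∫ x, (z n - x)⁻¹ ∂μ)
      = fun n => ∫ x, (z n - b) * (z n - x)⁻¹ ∂μ := by
    funext n
    rw [integral_const_mul]
  rw [hrw]
  have hind : (∫ x, Set.indicator {b} (fun _ => (1:ℝ)) x ∂μ) = (μ {b}).toReal := by
    simpa [measureReal_def] using integral_indicator_one (measurableSet_singleton b)
  rw [← hind]
  exact key
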